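/- Let r ∈ [0, 1/2), H₂ ∈ (1/2, 1), D₂, D₃ > 0, δ ∈ (0,1), and let K : (0,1] × (0,1] → ℝ be measurable with |K(t₂, z) − K(t₁, z)| ≤ D₂ |t₂ − t₁|^{H₂} z^{−r} for all z, t₁, t₂ ∈ (0,1], and 0 ≤ K(t, z) ≤ D₃ (t−z)^{H₂ − 1/2} z^{−r} for all 0 < z < t ≤ 1. Then for all s, t with 1−δ ≤ s < t ≤ 1, ∫_0^s (K(t,z) − K(s,z))² dz + ∫_s^t K(t,z)² dz ≤ D₄ |t−s|^{2H₂}, where D₄ = D₂²/(1−2r) + D₃² (1−δ)^{−2r}. -/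

import Mathlib

open MeasureTheory Set
open scoped ENNReal

/-- Inequality (4.5): the upper incremental variance bound (A2) on `[1-δ, 1]` for a Volterra
kernel satisfying (B2): for `1-δ ≤ s < t ≤ 1`,
`∫_0^s (K(t,z)-K(s,z))² dz + ∫_s^t K(t,z)² dz ≤ D₄ |t-s|^{2H₂}` with
`D₄ = D₂²/(1-2r) + D₃²(1-δ)^{-2r}`. -/
theorem volterra_kernel_A2 (r H₂ D₂ D₃ δ : ℝ) (K : ℝ → ℝ → ℝ)
    (hr : r ∈ Set.Ico (0 : ℝ) (1 / 2)) (hH₂ : H₂ ∈ Set.Ioo (1 / 2 : ℝ) 1)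
    (hD₂ : 0 < D₂) (hD₃ : 0 < D₃) (hδ : δ ∈ Set.Ioo (0 : ℝ) 1)
    (hmeas : Measurable (Function.uncurry K))
    (hB2 : ∀ z ∈ Set.Ioc (0 : ℝ) 1, ∀ t₁ ∈ Set.Ioc (0 : ℝ) 1, ∀ t₂ ∈ Set.Ioc (0 : ℝ) 1,
      |K t₂ z - K t₁ z| ≤ D₂ * |t₂ - t₁| ^ H₂ * z ^ (-r))
    (hKbound : ∀ z t : ℝ, 0 < z → z < t → t ≤ 1 →
      0 ≤ K t z ∧ K t z ≤ D₃ * (t - z) ^ (H₂ - 1 / 2) * z ^ (-r))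
    (s t : ℝ) (hs : 1 - δ ≤ s) (hst : s < t) (ht : t ≤ 1) :
    (∫⁻ z in Set.Ioc (0 : ℝ) s, ENNReal.ofReal ((K t z - K s z) ^ 2))
      + (∫⁻ z in Set.Ioc s t, ENNReal.ofReal ((K t z) ^ 2))
      ≤ ENNReal.ofReal
          ((D₂ ^ 2 / (1 - 2 * r) + D₃ ^ 2 * (1 - δ) ^ (-(2 * r))) * |t - s| ^ (2 * H₂)) := by
  obtain ⟨hr0, hr2⟩ := hr
  obtain ⟨hH1, hH1'⟩ := hH₂
  obtain ⟨hδ0, hδ1⟩ := hδ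
  have hs0 : 0 < s := lt_of_lt_of_le (by linarith) hs
  have ht0 : 0 < t := hs0.trans hst
  have hts : 0 < t - s := by linarith
  have h2r : 0 < 1 - 2 * r := by linarith
  have hδ0' : 0 < 1 - δ := by linarith
  set a : ℝ := t - s with ha
  have habs : |t - s| = a := abs_of_pos hts
  have hsq : ∀ x p : ℝ, 0 < x → (x ^ p) ^ 2 = x ^ (2 * p) := by
    intro x p hx
    rw [sq, ← Real.rpow_add hx]; ring_nf
  -- constants
  set C₁ : ℝ := D₂ ^ 2 * a ^ (2 * H₂) with hC₁
  set C₂ : ℝ := D₃ ^ 2 * (1 - δ) ^ (-(2 * r)) with hC₂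
  have hC₁0 : 0 ≤ C₁ := by positivity
  have hC₂0 : 0 ≤ C₂ := by positivity
  -- first integral bound
  have bound1 : (∫⁻ z in Set.Ioc (0 : ℝ) s, ENNReal.ofReal ((K t z - K s z) ^ 2))
      ≤ ∫⁻ z in Set.Ioc (0 : ℝ) s, ENNReal.ofReal (C₁ * z ^ (-(2 * r))) := by
    apply setLIntegral_mono
    · fun_prop
    · intro z hz
      apply ENNReal.ofReal_le_ofReal
      have hz0 : 0 < z := hz.1
      have hb := hB2 z ⟨hz0, hz.2.trans (by linarith)⟩ s ⟨hs0, by linarith⟩ t ⟨ht0, ht⟩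
      have h1 : (K t z - K s z) ^ 2 ≤ (D₂ * |t - s| ^ H₂ * z ^ (-r)) ^ 2 := by
        rw [← sq_abs]
        exact pow_le_pow_left₀ (abs_nonneg _) hb 2
      refine h1.trans_eq ?_
      rw [habs, mul_pow, mul_pow, hsq a H₂ hts, hsq z (-r) hz0, hC₁]
      ring_nf
  -- compute first bound integral
  have int1 : (∫⁻ z in Set.Ioc (0 : ℝ) s, ENNReal.ofReal (C₁ * z ^ (-(2 * r))))
      = ENNReal.ofReal (C₁ * (s ^ (1 - 2 * r) / (1 - 2 * r))) := by
    have hexp : (-1 : ℝ) < -(2 * r) := by linarith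
    have hint : IntegrableOn (fun z : ℝ => C₁ * z ^ (-(2 * r))) (Set.Ioc 0 s) :=
      ((intervalIntegrable_iff_integrableOn_Ioc_of_le hs0.le).mp
        (intervalIntegral.intervalIntegrable_rpow' hexp)).const_mul C₁
    rw [← ofReal_integral_eq_lintegral_ofReal hint]
    · congr 1
      rw [← intervalIntegral.integral_of_le hs0.le, intervalIntegral.integral_const_mul,
        integral_rpow (Or.inl hexp)]
      rw [Real.zero_rpow (by linarith)]
      ring_nf
    · filter_upwards [ae_restrict_of_forall_mem measurableSet_Ioc
        (fun z hz => hz.1)] with z hz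
      positivity
  -- second integral bound
  have bound2 : (∫⁻ z in Set.Ioc s t, ENNReal.ofReal ((K t z) ^ 2))
      ≤ ∫⁻ z in Set.Ioc s t, ENNReal.ofReal (C₂ * (t - z) ^ (2 * H₂ - 1)) := by
    rw [← setLIntegral_congr (Ioo_ae_eq_Ioc (a := s) (b := t)),
      ← setLIntegral_congr (Ioo_ae_eq_Ioc (a := s) (b := t))]
    apply setLIntegral_mono
    · fun_prop
    · intro z hz
      apply ENNReal.ofReal_le_ofReal
      have hz0 : 0 < z := hs0.trans hz.1
      have hzt : 0 < t - z := by linarith [hz.2]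
      obtain ⟨hK0, hKle⟩ := hKbound z t hz0 hz.2 ht
      have h1 : (K t z) ^ 2 ≤ (D₃ * (t - z) ^ (H₂ - 1 / 2) * z ^ (-r)) ^ 2 :=
        pow_le_pow_left₀ hK0 hKle 2
      refine h1.trans ?_
      rw [mul_pow, mul_pow, hsq (t - z) _ hzt, hsq z (-r) hz0]
      have hz' : z ^ (2 * -r) ≤ (1 - δ) ^ (-(2 * r)) := by
        rw [show (2 : ℝ) * -r = -(2 * r) by ring]
        exact Real.rpow_le_rpow_of_nonpos hδ0' (le_trans hs hz.1.le) (by linarith)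
      calc D₃ ^ 2 * (t - z) ^ (2 * (H₂ - 1 / 2)) * z ^ (2 * -r)
          ≤ D₃ ^ 2 * (t - z) ^ (2 * (H₂ - 1 / 2)) * ((1 - δ) ^ (-(2 * r))) := by
            apply mul_le_mul_of_nonneg_left hz' (by positivity)
        _ = C₂ * (t - z) ^ (2 * H₂ - 1) := by rw [hC₂]; ring_nf
  -- compute second bound integral
  have int2 : (∫⁻ z in Set.Ioc s t, ENNReal.ofReal (C₂ * (t - z) ^ (2 * H₂ - 1)))
      = ENNReal.ofReal (C₂ * (a ^ (2 * H₂) / (2 * H₂))) := by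
    have hexp : (-1 : ℝ) < 2 * H₂ - 1 := by linarith
    have hii : IntervalIntegrable (fun z : ℝ => (t - z) ^ (2 * H₂ - 1)) volume s t := by
      have := (intervalIntegral.intervalIntegrable_rpow' (a := a) (b := 0) hexp).comp_sub_left t
      simpa [ha] using this
    have hint : IntegrableOn (fun z : ℝ => C₂ * (t - z) ^ (2 * H₂ - 1)) (Set.Ioc s t) :=
      ((intervalIntegrable_iff_integrableOn_Ioc_of_le hst.le).mp hii).const_mul C₂
    rw [← ofReal_integral_eq_lintegral_ofReal hint]
    · congr 1
      rw [← intervalIntegral.integral_of_le hst.le, intervalIntegral.integral_const_mul,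
        intervalIntegral.integral_comp_sub_left (fun x : ℝ => x ^ (2 * H₂ - 1)) t,
        show t - t = 0 by ring, integral_rpow (Or.inl hexp),
        Real.zero_rpow (by linarith)]
      rw [ha]
      ring_nf
    · filter_upwards [ae_restrict_of_forall_mem measurableSet_Ioc
        (fun z (hz : z ∈ Set.Ioc s t) => sub_nonneg.mpr hz.2)] with z hz
      have : (0:ℝ) ≤ (t - z) ^ (2 * H₂ - 1) := Real.rpow_nonneg hz _
      positivity
  -- combine
  have hA : C₁ * (s ^ (1 - 2 * r) / (1 - 2 * r)) ≤ D₂ ^ 2 / (1 - 2 * r) * a ^ (2 * H₂) := by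
    have hs1 : s ^ (1 - 2 * r) ≤ 1 := Real.rpow_le_one hs0.le (by linarith) (by linarith)
    rw [hC₁]
    have h : D₂ ^ 2 * a ^ (2 * H₂) * (s ^ (1 - 2 * r) / (1 - 2 * r))
        ≤ D₂ ^ 2 * a ^ (2 * H₂) * (1 / (1 - 2 * r)) := by
      gcongr
    calc D₂ ^ 2 * a ^ (2 * H₂) * (s ^ (1 - 2 * r) / (1 - 2 * r))
        ≤ D₂ ^ 2 * a ^ (2 * H₂) * (1 / (1 - 2 * r)) := h
      _ = D₂ ^ 2 / (1 - 2 * r) * a ^ (2 * H₂) := by ring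
  have hB : C₂ * (a ^ (2 * H₂) / (2 * H₂)) ≤ C₂ * a ^ (2 * H₂) := by
    have h2H : 1 ≤ 2 * H₂ := by linarith
    have ha0 : (0:ℝ) ≤ a ^ (2 * H₂) := Real.rpow_nonneg hts.le _
    have : a ^ (2 * H₂) / (2 * H₂) ≤ a ^ (2 * H₂) := by
      rw [div_le_iff₀ (by linarith)]
      nlinarith
    exact mul_le_mul_of_nonneg_left this hC₂0
  calc (∫⁻ z in Set.Ioc (0 : ℝ) s, ENNReal.ofReal ((K t z - K s z) ^ 2))
        + (∫⁻ z in Set.Ioc s t, ENNReal.ofReal ((K t z) ^ 2))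
      ≤ ENNReal.ofReal (C₁ * (s ^ (1 - 2 * r) / (1 - 2 * r)))
          + ENNReal.ofReal (C₂ * (a ^ (2 * H₂) / (2 * H₂))) := by
        exact add_le_add (bound1.trans int1.le) (bound2.trans int2.le)
    _ = ENNReal.ofReal (C₁ * (s ^ (1 - 2 * r) / (1 - 2 * r))
          + C₂ * (a ^ (2 * H₂) / (2 * H₂))) := by
        rw [ENNReal.ofReal_add (by positivity) (by positivity)]
    _ ≤ ENNReal.ofReal ((D₂ ^ 2 / (1 - 2 * r) + D₃ ^ 2 * (1 - δ) ^ (-(2 * r)))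
          * |t - s| ^ (2 * H₂)) := by
        apply ENNReal.ofReal_le_ofReal
        rw [habs, add_mul, hC₂]
        exact add_le_add hA hB
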